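/- arXiv:2509.09831 — 5 statements merged into one kernel-verified Lean document; each statement's English description precedes it below -/
import Mathlib

section
/- Let Ω be a family of subsets of [n] such that for all pairwise distinct A, B, C ∈ Ω one has C ⊄ A ∪ B. Then for any two distinct A, B ∈ Ω, the linear functional x ↦ -⟨1_{(A∪B)^c}, x⟩ on ℝ^n vanishes on the characteristic vectors 1_A and 1_B and is strictly negative on 1_C for every C ∈ Ω \ {A,B}. Consequently, the segment [1_A, 1_B] is an edge (1-dimensional face) of the polytope conv{1_S : S ∈ Ω}, so the graph of this polytope is complete. -/
noncomputable section

/-- The dot product on `ℝ^n`. -/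
def dot {n : ℕ} (c x : Fin n → ℝ) : ℝ := ∑ i, c i * x i

/-- The vertex set of the 0/1-cube in `ℝ^n`. -/
def cube01 (n : ℕ) : Set (Fin n → ℝ) := {x | ∀ i, x i = 0 ∨ x i = 1}

/-- `F` is the vertex set of a face of the polytope `conv P`, where `P` is the set of
vertices of the polytope: there is a supporting linear functional attaining its maximum
on `P` exactly on `F`. -/
def IsFaceOf {n : ℕ} (P F : Set (Fin n → ℝ)) : Prop :=
  ∃ (c : Fin n → ℝ) (γ : ℝ), (∀ x ∈ P, dot c x ≤ γ) ∧ F = {x | x ∈ P ∧ dot c x = γ}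

/-- `{x, y}` is an edge (1-dimensional face) of the polytope `conv P`. -/
def IsPolytopeEdge {n : ℕ} (P : Set (Fin n → ℝ)) (x y : Fin n → ℝ) : Prop :=
  x ∈ P ∧ y ∈ P ∧ x ≠ y ∧ IsFaceOf P {x, y}

/-- The number of edges of the graph of the polytope `conv P` with one endpoint in `A`
and the other endpoint in `B`. -/
def polyEdgeCount {n : ℕ} (P A B : Set (Fin n → ℝ)) : ℕ :=
  {p : (Fin n → ℝ) × (Fin n → ℝ) | p.1 ∈ A ∧ p.2 ∈ B ∧ IsPolytopeEdge P p.1 p.2}.ncard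

/-- Adjacency in the hypercube graph `Q^d`: the two points differ in exactly one coordinate. -/
def cubeAdj {d : ℕ} (x y : Fin d → ℝ) : Prop := {i | x i ≠ y i}.ncard = 1

/-- The number of hypercube-neighbors of `x` belonging to `C`. -/
def cubeDeg {d : ℕ} (x : Fin d → ℝ) (C : Set (Fin d → ℝ)) : ℕ :=
  {y | y ∈ C ∧ cubeAdj x y}.ncard

/-- The number of hypercube edges with one endpoint in `A` and the other in `B`. -/
def cubeEdgeCount {d : ℕ} (A B : Set (Fin d → ℝ)) : ℕ :=
  {p : (Fin d → ℝ) × (Fin d → ℝ) | p.1 ∈ A ∧ p.2 ∈ B ∧ cubeAdj p.1 p.2}.ncard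

/-- `R ⊆ {0,1}^d` is `ε`-good: (R1) every vertex of `R` has more than `(1-ε)d`
hypercube-neighbors in `R`; (R2) every `C ⊆ {0,1}^d` with `|C| ≥ 2^d/20` satisfies
`|C ∩ R| ≥ 2^d/40`. -/
def epsGood {d : ℕ} (ε : ℝ) (R : Set (Fin d → ℝ)) : Prop :=
  R ⊆ cube01 d ∧
  (∀ x ∈ R, (1 - ε) * d < (cubeDeg x R : ℝ)) ∧
  (∀ C ⊆ cube01 d, (2 : ℝ) ^ d / 20 ≤ (C.ncard : ℝ) → (2 : ℝ) ^ d / 40 ≤ ((C ∩ R).ncard : ℝ))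

/-- Projection onto the first `d` coordinates. -/
def proj {n d : ℕ} (h : d ≤ n) (x : Fin n → ℝ) : Fin d → ℝ := fun i => x (Fin.castLE h i)

/-- The characteristic vector of a subset of `[n]`. -/
def charVec {n : ℕ} (A : Finset (Fin n)) : Fin n → ℝ := fun i => if i ∈ A then 1 else 0

/-- A face of the cube `[0,1]^n`, given by fixing the coordinates in the support of `σ`;
its dimension is the number of indices where `σ` is `none`. -/
def cubeFace {n : ℕ} (σ : Fin n → Option Bool) : Set (Fin n → ℝ) :=
  {z | z ∈ cube01 n ∧ ∀ i b, σ i = some b → z i = if b then 1 else 0}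

lemma dot_charVec_eq {n : ℕ} (T S : Finset (Fin n)) :
    dot (fun i => if i ∈ T then (0 : ℝ) else -1) (charVec S) = -((S \ T).card : ℝ) := by
  unfold dot charVec
  rw [show -(((S \ T).card : ℝ)) = ∑ i, (if i ∈ S \ T then (-1 : ℝ) else 0) by
    rw [Finset.sum_ite_mem, Finset.univ_inter, Finset.sum_const]; simp]
  apply Finset.sum_congr rfl
  intro i _
  by_cases h1 : i ∈ T <;> by_cases h2 : i ∈ S <;> simp [h1, h2, Finset.mem_sdiff]

lemma charVec_injective {n : ℕ} : Function.Injective (charVec (n := n)) := by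
  intro S T h
  ext i
  have := congrFun h i
  unfold charVec at this
  by_cases h1 : i ∈ S <;> by_cases h2 : i ∈ T <;> simp [h1, h2] at this ⊢

/-- If no member of the family `Ω` is contained in the union of two other members, then for
any two distinct `A, B ∈ Ω` the functional `x ↦ -⟨1_{(A∪B)ᶜ}, x⟩` vanishes on `1_A` and
`1_B`, is negative on `1_C` for every other `C ∈ Ω`, and consequently `{1_A, 1_B}` is an
edge of the polytope `conv {1_S : S ∈ Ω}`; hence the graph of this polytope is complete. -/
theorem graph_complete_of_no_union_containment {n : ℕ} (Ω : Finset (Finset (Fin n)))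
    (hΩ : ∀ A ∈ Ω, ∀ B ∈ Ω, ∀ C ∈ Ω, A ≠ B → A ≠ C → B ≠ C → ¬ C ⊆ A ∪ B)
    (A B : Finset (Fin n)) (hA : A ∈ Ω) (hB : B ∈ Ω) (hAB : A ≠ B) :
    (∀ i, (fun i => if i ∈ A ∪ B then (0 : ℝ) else -1) i = - (if i ∈ A ∪ B then (0:ℝ) else 1)) ∧
    dot (fun i => if i ∈ A ∪ B then (0 : ℝ) else -1) (charVec A) = 0 ∧
    dot (fun i => if i ∈ A ∪ B then (0 : ℝ) else -1) (charVec B) = 0 ∧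
    (∀ C ∈ Ω, C ≠ A → C ≠ B →
      dot (fun i => if i ∈ A ∪ B then (0 : ℝ) else -1) (charVec C) < 0) ∧
    IsPolytopeEdge {x | ∃ S ∈ Ω, charVec S = x} (charVec A) (charVec B) := by
  have hzero : ∀ S : Finset (Fin n), S ⊆ A ∪ B →
      dot (fun i => if i ∈ A ∪ B then (0 : ℝ) else -1) (charVec S) = 0 := by
    intro S hS
    rw [dot_charVec_eq]
    simp [Finset.sdiff_eq_empty_iff_subset.2 hS]
  have hneg : ∀ C ∈ Ω, C ≠ A → C ≠ B →
      dot (fun i => if i ∈ A ∪ B then (0 : ℝ) else -1) (charVec C) < 0 := by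
    intro C hC hCA hCB
    rw [dot_charVec_eq]
    have hsub : ¬ C ⊆ A ∪ B := hΩ A hA B hB C hC hAB (Ne.symm hCA) (Ne.symm hCB)
    have h1 : (C \ (A ∪ B)).Nonempty := by
      rw [Finset.sdiff_nonempty]; exact hsub
    have h2 := Finset.card_pos.2 h1
    have h3 : (0 : ℝ) < ((C \ (A ∪ B)).card : ℝ) := by exact_mod_cast h2
    linarith
  refine ⟨fun i => by by_cases h : i ∈ A ∪ B <;> simp [h],
    hzero A Finset.subset_union_left,
    hzero B Finset.subset_union_right, hneg, ⟨A, hA, rfl⟩, ⟨B, hB, rfl⟩,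
    fun h => hAB (charVec_injective h), ?_⟩
  refine ⟨fun i => if i ∈ A ∪ B then (0 : ℝ) else -1, 0, ?_, ?_⟩
  · rintro x ⟨S, hS, rfl⟩
    rw [dot_charVec_eq]
    simp
  · ext x
    constructor
    · rintro (rfl | rfl)
      · exact ⟨⟨A, hA, rfl⟩, hzero A Finset.subset_union_left⟩
      · exact ⟨⟨B, hB, rfl⟩, hzero B Finset.subset_union_right⟩
    · rintro ⟨⟨S, hS, rfl⟩, hd⟩
      by_cases hSA : S = A
      · left; rw [hSA]
      by_cases hSB : S = B
      · right; simp [hSB]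
      · exact absurd hd (ne_of_lt (hneg S hS hSA hSB))
end
end

section
/- Let P be a polytope, let π be a coordinate projection, R = π(P), and let A ⊆ P be a set of vertices with A^c = P \ A. Define M = {x ∈ R : the fiber P_x = π^{-1}({x}) ∩ P meets both A and A^c}. Then the number of edges of the graph of P between A and A^c is at least |M|. -/
noncomputable section

lemma cube01_finite (n : ℕ) : (cube01 n).Finite := by
  have h : cube01 n ⊆ Set.range (fun f : Fin n → Bool => fun i => if f i then (1:ℝ) else 0) := by
    intro x hx
    refine ⟨fun i => x i = 1, ?_⟩
    funext i
    rcases hx i with h | h <;> simp [h]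
  exact (Set.finite_range _).subset h

lemma crossing_edge {n d : ℕ} (hd : d ≤ n) (P : Set (Fin n → ℝ)) (hP : P ⊆ cube01 n)
    (A : Set (Fin n → ℝ)) (hA : A ⊆ P) :
    ∀ k (a b : Fin n → ℝ), a ∈ A → b ∈ P \ A → proj hd a = proj hd b →
      (Finset.univ.filter fun i => a i ≠ b i).card ≤ k →
      ∃ a' b', a' ∈ A ∧ b' ∈ P \ A ∧ proj hd a' = proj hd a ∧ IsPolytopeEdge P a' b' := by
  intro k
  induction k with
  | zero =>
    intro a b ha hb hproj hcard
    exfalso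
    have hab : a = b := by
      funext i
      by_contra h
      have hi : i ∈ Finset.univ.filter fun i => a i ≠ b i := by simp [h]
      have := Finset.card_pos.mpr ⟨i, hi⟩
      omega
    exact hb.2 (hab ▸ ha)
  | succ k ih =>
    intro a b ha hb hproj hcard
    have ha01 := hP (hA ha)
    have hb01 := hP hb.1
    set c : Fin n → ℝ := fun i => a i + b i - 1 with hc
    have hterm : ∀ z ∈ cube01 n, ∀ i, c i * z i ≤ c i * a i := by
      intro z hz i
      rcases ha01 i with h1 | h1 <;> rcases hb01 i with h2 | h2 <;>
        rcases hz i with h3 | h3 <;> simp [hc, h1, h2, h3]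
    have hle : ∀ z ∈ P, dot c z ≤ dot c a :=
      fun z hz => Finset.sum_le_sum fun i _ => hterm z (hP hz) i
    have hab : dot c b = dot c a := by
      refine Finset.sum_congr rfl fun i _ => ?_
      rcases ha01 i with h1 | h1 <;> rcases hb01 i with h2 | h2 <;> simp [hc, h1, h2]
    have heqchar : ∀ z ∈ P, dot c z = dot c a → ∀ i, a i = b i → z i = a i := by
      intro z hzP he i hi
      have hterm' := (Finset.sum_eq_sum_iff_of_le (fun i _ => hterm z (hP hzP) i)).mp he
      have := hterm' i (Finset.mem_univ i)
      rcases ha01 i with h1 | h1 <;> rcases hb01 i with h2 | h2 <;>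
        simp [hc, h1, h2] at this hi ⊢ <;> linarith [this]
    have hne : a ≠ b := fun h => hb.2 (h ▸ ha)
    by_cases hex : ∃ z ∈ P, dot c z = dot c a ∧ z ≠ a ∧ z ≠ b
    · obtain ⟨z, hzP, hze, hza, hzb⟩ := hex
      have hz01 := hP hzP
      have hag : ∀ i, a i = b i → z i = a i := heqchar z hzP hze
      have hprojz : proj hd z = proj hd a := by
        funext i
        exact hag _ (congrFun hproj i)
      -- coordinates where a,b differ: z agrees with exactly one of them
      have hzi : ∀ i, a i ≠ b i → (z i = a i ∨ z i = b i) := by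
        intro i hi
        rcases ha01 i with h1 | h1 <;> rcases hb01 i with h2 | h2 <;>
          rcases hz01 i with h3 | h3 <;> simp [h1, h2, h3] at hi ⊢
      -- key subset facts
      have hsubaz : (Finset.univ.filter fun i => a i ≠ z i) ⊆
          Finset.univ.filter fun i => a i ≠ b i := by
        intro i hi
        simp only [Finset.mem_filter, Finset.mem_univ, true_and] at hi ⊢
        intro h
        exact hi (hag i h).symm
      have hsubzb : (Finset.univ.filter fun i => z i ≠ b i) ⊆
          Finset.univ.filter fun i => a i ≠ b i := by
        intro i hi
        simp only [Finset.mem_filter, Finset.mem_univ, true_and] at hi ⊢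
        intro h
        exact hi ((hag i h).trans h)
      have hcard1 : (Finset.univ.filter fun i => a i ≠ z i).card <
          (Finset.univ.filter fun i => a i ≠ b i).card := by
        apply Finset.card_lt_card
        rw [Finset.ssubset_iff_of_subset hsubaz]
        obtain ⟨i, hi⟩ : ∃ i, z i ≠ b i := by
          by_contra h
          push_neg at h
          exact hzb (funext h)
        have hiab : a i ≠ b i := fun h => hi ((hag i h).trans h)
        have : z i = a i := by
          rcases hzi i hiab with h | h
          · exact h
          · exact absurd h hi
        exact ⟨i, by simp [hiab], by simp [this]⟩
      have hcard2 : (Finset.univ.filter fun i => z i ≠ b i).card <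
          (Finset.univ.filter fun i => a i ≠ b i).card := by
        apply Finset.card_lt_card
        rw [Finset.ssubset_iff_of_subset hsubzb]
        obtain ⟨i, hi⟩ : ∃ i, z i ≠ a i := by
          by_contra h
          push_neg at h
          exact hza (funext h)
        have hiab : a i ≠ b i := fun h => hi (hag i h)
        have : z i = b i := by
          rcases hzi i hiab with h | h
          · exact absurd h hi
          · exact h
        exact ⟨i, by simp [hiab], by simp [this]⟩
      by_cases hzA : z ∈ A
      · obtain ⟨a', b', h1, h2, h3, h4⟩ :=
          ih z b hzA hb (hprojz.trans hproj) (by omega)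
        exact ⟨a', b', h1, h2, h3.trans hprojz, h4⟩
      · obtain ⟨a', b', h1, h2, h3, h4⟩ :=
          ih a z ha ⟨hzP, hzA⟩ hprojz.symm (by omega)
        exact ⟨a', b', h1, h2, h3, h4⟩
    · push_neg at hex
      refine ⟨a, b, ha, hb, rfl, hA ha, hb.1, hne, c, dot c a, hle, ?_⟩
      ext z
      simp only [Set.mem_insert_iff, Set.mem_singleton_iff, Set.mem_setOf_eq]
      constructor
      · rintro (rfl | rfl)
        · exact ⟨hA ha, rfl⟩
        · exact ⟨hb.1, hab⟩
      · rintro ⟨hzP, hze⟩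
        by_contra h
        push_neg at h
        exact h.2 (hex z hzP hze h.1)

/-- First part of the projection lemma: the number of edges of the graph of `conv P`
between `A` and `P \ A` is at least the number of fibers of the projection meeting
both `A` and `P \ A`. -/
theorem edges_ge_mixed_fibers {n d : ℕ} (hd : d ≤ n)
    (P : Set (Fin n → ℝ)) (hP : P ⊆ cube01 n) (A : Set (Fin n → ℝ)) (hA : A ⊆ P) :
    ({x : Fin d → ℝ | (∃ a ∈ A, proj hd a = x) ∧ ∃ b ∈ P \ A, proj hd b = x}).ncard
      ≤ polyEdgeCount P A (P \ A) := by
  classical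
  set M : Set (Fin d → ℝ) :=
    {x : Fin d → ℝ | (∃ a ∈ A, proj hd a = x) ∧ ∃ b ∈ P \ A, proj hd b = x} with hM
  set E : Set ((Fin n → ℝ) × (Fin n → ℝ)) :=
    {p : (Fin n → ℝ) × (Fin n → ℝ) | p.1 ∈ A ∧ p.2 ∈ P \ A ∧ IsPolytopeEdge P p.1 p.2} with hE
  have hEfin : E.Finite := by
    have hsub : E ⊆ (cube01 n) ×ˢ (cube01 n) := by
      rintro ⟨p1, p2⟩ ⟨h1, h2, _⟩
      exact ⟨hP (hA h1), hP h2.1⟩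
    exact ((cube01_finite n).prod (cube01_finite n)).subset hsub
  have key : ∀ x : Fin d → ℝ, ∃ p : (Fin n → ℝ) × (Fin n → ℝ),
      x ∈ M → p ∈ E ∧ proj hd p.1 = x := by
    intro x
    by_cases hx : x ∈ M
    · obtain ⟨⟨a, ha, hax⟩, ⟨b, hb, hbx⟩⟩ := hx
      obtain ⟨a', b', h1, h2, h3, h4⟩ :=
        crossing_edge hd P hP A hA (Finset.univ.filter fun i => a i ≠ b i).card
          a b ha hb (hax.trans hbx.symm) le_rfl
      exact ⟨(a', b'), fun _ => ⟨⟨h1, h2, h4⟩, h3.trans hax⟩⟩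
    · exact ⟨((fun _ => 0), (fun _ => 0)), fun h => absurd h hx⟩
  choose f hf using key
  have : M.ncard ≤ E.ncard := by
    apply Set.ncard_le_ncard_of_injOn f (fun x hx => (hf x hx).1) ?_ hEfin
    intro x hx y hy hxy
    have h1 := (hf x hx).2
    have h2 := (hf y hy).2
    rw [← h1, ← h2, hxy]
  exact this
end
end

section
/- Let π : {0,1}^n → {0,1}^d be the coordinate projection, P ⊆ {0,1}^n a finite set, R = π(P), and A ⊆ P with B = π(A) and B^c = R \ B. Then the number of edges of the graph of conv(P) between A and P \ A is at least the number of edges of the graph of conv(R) between B and B^c. -/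
noncomputable section

-- basic dot lemmas
lemma dot_add {n : ℕ} (c c' x : Fin n → ℝ) : dot (c + c') x = dot c x + dot c' x := by
  simp [dot, add_mul, Finset.sum_add_distrib]

lemma dot_smul {n : ℕ} (t : ℝ) (c x : Fin n → ℝ) : dot (t • c) x = t * dot c x := by
  simp [dot, Finset.mul_sum, mul_assoc]

lemma dot_sub {n : ℕ} (c c' x : Fin n → ℝ) : dot (c - c') x = dot c x - dot c' x := by
  simp [dot, sub_mul, Finset.sum_sub_distrib]

lemma dot_comm {n : ℕ} (c x : Fin n → ℝ) : dot c x = dot x c := by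
  simp [dot, mul_comm]

lemma dot_self_pos {n : ℕ} {v : Fin n → ℝ} (hv : v ≠ 0) : 0 < dot v v := by
  rcases Function.ne_iff.1 hv with ⟨i, hi⟩
  have : (0:ℝ) < v i * v i := mul_self_pos.mpr hi
  refine Finset.sum_pos' (fun j _ => mul_self_nonneg _) ⟨i, Finset.mem_univ i, this⟩

def psiv {n : ℕ} (a : Fin n → ℝ) : Fin n → ℝ := fun i => 2 * a i - 1

lemma psiv_lt {n : ℕ} {a q : Fin n → ℝ} (ha : a ∈ cube01 n) (hq : q ∈ cube01 n)
    (hne : q ≠ a) : dot (psiv a) q < dot (psiv a) a := by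
  rcases Function.ne_iff.1 hne with ⟨i, hi⟩
  refine Finset.sum_lt_sum (fun j _ => ?_) ⟨i, Finset.mem_univ i, ?_⟩
  · rcases ha j with h | h <;> rcases hq j with h' | h' <;> simp [psiv, h, h'] <;> norm_num
  · rcases ha i with h | h <;> rcases hq i with h' | h' <;>
      simp [psiv, h, h'] at hi ⊢ <;> norm_num

/-- For a finite set and positive "margins" u, there is a uniform ε with ε * v p < u p. -/
lemma exists_eps {α : Type*} {S : Set α} (hS : S.Finite) (u v : α → ℝ)
    (hu : ∀ p ∈ S, 0 < u p) : ∃ ε > (0:ℝ), ∀ p ∈ S, ε * v p < u p := by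
  refine Set.Finite.induction_on
    (motive := fun S _ => (∀ p ∈ S, 0 < u p) → ∃ ε > (0:ℝ), ∀ p ∈ S, ε * v p < u p)
    S hS (fun _ => ⟨1, one_pos, by simp⟩) ?_ hu
  intro a s _ _ ih hu'
  obtain ⟨ε, hε, hεs⟩ := ih (fun p hp => hu' p (Set.mem_insert_of_mem a hp))
  have hua : 0 < u a := hu' a (Set.mem_insert a s)
  refine ⟨min ε (u a / (|v a| + 1)), lt_min hε (by positivity), ?_⟩
  intro p hp
  rcases Set.mem_insert_iff.1 hp with rfl | hps
  · have h1 : (0:ℝ) < u p / (|v p| + 1) := by positivity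
    have h2 : min ε (u p / (|v p| + 1)) ≤ u p / (|v p| + 1) := min_le_right _ _
    have h3 : 0 < min ε (u p / (|v p| + 1)) := lt_min hε h1
    have habs : v p ≤ |v p| := le_abs_self _
    have h5 : (u p / (|v p| + 1)) * (|v p| + 1) = u p := div_mul_cancel₀ _ (by positivity)
    nlinarith [abs_nonneg (v p)]
  · have h2 : 0 < min ε (u a / (|v a| + 1)) := lt_min hε (by positivity)
    have h3 := hεs p hps
    have h4 : min ε (u a / (|v a| + 1)) ≤ ε := min_le_left _ _
    rcases le_or_gt (v p) 0 with hv | hv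
    · have h5 : min ε (u a / (|v a| + 1)) * v p ≤ 0 :=
        mul_nonpos_of_nonneg_of_nonpos h2.le hv
      exact h5.trans_lt (hu' p (Set.mem_insert_of_mem a hps))
    · nlinarith

lemma faceOf_trans {n : ℕ} {P Q F : Set (Fin n → ℝ)} (hPfin : P.Finite)
    (h1 : IsFaceOf P Q) (h2 : IsFaceOf Q F) : IsFaceOf P F := by
  obtain ⟨c1, γ1, hb1, hQ⟩ := h1
  obtain ⟨c2, γ2, hb2, hF⟩ := h2
  have hQsub : ∀ p ∈ Q, p ∈ P ∧ dot c1 p = γ1 := by intro p hp; rw [hQ] at hp; exact hp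
  have hstrict : ∀ p ∈ P \ Q, dot c1 p < γ1 := by
    intro p hp
    rcases lt_or_eq_of_le (hb1 p hp.1) with h' | h'
    · exact h'
    · exact absurd (show p ∈ Q by rw [hQ]; exact ⟨hp.1, h'⟩) hp.2
  obtain ⟨ε, hε, hεlt⟩ := exists_eps (hPfin.diff (t := Q)) (fun p => γ1 - dot c1 p)
      (fun p => dot c2 p - γ2) (fun p hp => by
        have := hstrict p hp; show (0:ℝ) < γ1 - dot c1 p; linarith)
  refine ⟨c1 + ε • c2, γ1 + ε * γ2, ?_, ?_⟩
  · intro p hp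
    rw [dot_add, dot_smul]
    by_cases hpQ : p ∈ Q
    · have h1' := (hQsub p hpQ).2
      have := hb2 p hpQ
      nlinarith
    · have := hεlt p ⟨hp, hpQ⟩
      linarith
  · ext p
    simp only [Set.mem_setOf_eq, dot_add, dot_smul]
    constructor
    · intro hpF
      rw [hF] at hpF
      obtain ⟨hpQ, h2'⟩ := hpF
      obtain ⟨hpP, h1'⟩ := hQsub p hpQ
      exact ⟨hpP, by rw [h1', h2']⟩
    · rintro ⟨hpP, h⟩
      by_cases hpQ : p ∈ Q
      · have h1' := (hQsub p hpQ).2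
        rw [h1'] at h
        have h2' : dot c2 p = γ2 := by
          have := mul_left_cancel₀ (ne_of_gt hε) (by linarith : ε * dot c2 p = ε * γ2)
          exact this
        rw [hF]; exact ⟨hpQ, h2'⟩
      · exfalso
        have := hεlt p ⟨hpP, hpQ⟩
        linarith

/-- Off a finite set of reals, pick a point; affine functions vanish for at most one
argument unless degenerate. -/
lemma exists_avoid (B : Set ℝ) (hB : B.Finite) : ∃ t : ℝ, t ∉ B := by
  have := hB.infinite_compl
  exact this.nonempty

/-- There is a vector not orthogonal to any of finitely many nonzero vectors. -/
lemma exists_nonorth {n : ℕ} {α : Type*} {W : Set α} (hW : W.Finite)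
    (v : α → (Fin n → ℝ)) (hv : ∀ w ∈ W, v w ≠ 0) :
    ∃ χ : Fin n → ℝ, ∀ w ∈ W, dot χ (v w) ≠ 0 := by
  refine Set.Finite.induction_on
    (motive := fun W _ => (∀ w ∈ W, v w ≠ 0) → ∃ χ : Fin n → ℝ, ∀ w ∈ W, dot χ (v w) ≠ 0)
    W hW (fun _ => ⟨0, by simp⟩) ?_ hv
  intro a s _ hsfin ih hv'
  obtain ⟨χ, hχ⟩ := ih (fun w hw => hv' w (Set.mem_insert_of_mem a hw))
  have hva : v a ≠ 0 := hv' a (Set.mem_insert a s)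
  -- bad t's
  set B : Set ℝ := (fun w => -(dot χ (v w)) / dot (v a) (v w)) '' (insert a s) with hBdef
  obtain ⟨t, ht⟩ := exists_avoid B ((hsfin.insert a).image _)
  refine ⟨χ + t • v a, ?_⟩
  intro w hw
  rw [dot_add, dot_smul]
  intro heq
  have hcoef : dot (v a) (v w) ≠ 0 := by
    intro hc
    rw [hc, mul_zero, add_zero] at heq
    rcases Set.mem_insert_iff.1 hw with rfl | hws
    · exact (dot_self_pos hva).ne' hc
    · exact hχ w hws heq
  apply ht
  rw [hBdef]
  refine ⟨w, hw, ?_⟩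
  field_simp
  linarith [heq]

lemma dot_comb {n : ℕ} (χ x y z : Fin n → ℝ) (s s' : ℝ) :
    dot χ (s • (x - y) - s' • (x - z))
      = s * (dot χ x - dot χ y) - s' * (dot χ x - dot χ z) := by
  have h : ∀ i, χ i * ((s • (x - y) - s' • (x - z)) i)
      = s * (χ i * x i - χ i * y i) - s' * (χ i * x i - χ i * z i) := by
    intro i; simp [Pi.smul_apply, Pi.sub_apply]; ring
  simp only [dot]
  rw [Finset.sum_congr rfl (fun i _ => h i)]
  rw [Finset.sum_sub_distrib, ← Finset.mul_sum, ← Finset.mul_sum,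
    Finset.sum_sub_distrib, Finset.sum_sub_distrib]

/-- Three distinct 0/1 points with positive weights: the combination is nonzero. -/
lemma comb_ne_zero {n : ℕ} {a q q' : Fin n → ℝ} (ha : a ∈ cube01 n) (hq : q ∈ cube01 n)
    (hq' : q' ∈ cube01 n) (hqq' : q ≠ q') {l l' : ℝ} (hl : 0 < l) (hl' : 0 < l') :
    l' • (a - q) - l • (a - q') ≠ 0 := by
  intro h0
  obtain ⟨i, hi⟩ := Function.ne_iff.1 hqq'
  have hcoord : l' * (a i - q i) - l * (a i - q' i) = 0 := by
    have := congrFun h0 i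
    simpa [Pi.smul_apply, Pi.sub_apply] using this
  rcases ha i with h1 | h1 <;> rcases hq i with h2 | h2 <;> rcases hq' i with h3 | h3 <;>
    simp only [h1, h2, h3] at hcoord hi <;> first
      | exact hi rfl
      | nlinarith

/-- A generic functional with strict unique max at `a` on `Q` and injective "ratios". -/
lemma exists_generic {n : ℕ} {Q : Set (Fin n → ℝ)} (hQfin : Q.Finite)
    (hQc : Q ⊆ cube01 n) {a : Fin n → ℝ} (ha : a ∈ Q) (g : Fin n → ℝ) :
    ∃ ψ : Fin n → ℝ, (∀ q ∈ Q, q ≠ a → dot ψ q < dot ψ a) ∧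
      (∀ q ∈ Q, ∀ q' ∈ Q, dot g a < dot g q → dot g a < dot g q' → q ≠ q' →
        (dot ψ a - dot ψ q) * (dot g q' - dot g a)
          ≠ (dot ψ a - dot ψ q') * (dot g q - dot g a)) := by
  classical
  set W : Set ((Fin n → ℝ) × (Fin n → ℝ)) :=
    {p | p.1 ∈ Q ∧ p.2 ∈ Q ∧ dot g a < dot g p.1 ∧ dot g a < dot g p.2 ∧ p.1 ≠ p.2} with hWdef
  have hWfin : W.Finite := by
    apply (hQfin.prod hQfin).subset
    rintro ⟨q, q'⟩ h
    exact ⟨h.1, h.2.1⟩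
  set v : ((Fin n → ℝ) × (Fin n → ℝ)) → (Fin n → ℝ) :=
    fun p => (dot g p.2 - dot g a) • (a - p.1) - (dot g p.1 - dot g a) • (a - p.2) with hvdef
  have hvne : ∀ w ∈ W, v w ≠ 0 := by
    rintro ⟨q, q'⟩ ⟨h1, h2, h3, h4, h5⟩
    exact comb_ne_zero (hQc ha) (hQc h1) (hQc h2) h5 (by linarith) (by linarith)
  obtain ⟨χ, hχ⟩ := exists_nonorth hWfin v hvne
  -- margins for ψ0
  obtain ⟨ε0, hε0, hε0lt⟩ := exists_eps (hQfin.diff (t := {a}))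
    (fun q => dot (psiv a) a - dot (psiv a) q) (fun q => dot χ q - dot χ a)
    (fun q hq => by
      have := psiv_lt (hQc ha) (hQc hq.1) (by simpa using hq.2)
      show (0:ℝ) < dot (psiv a) a - dot (psiv a) q
      linarith)
  -- bad epsilons
  set B : Set ℝ := (fun w => -(dot (psiv a) (v w)) / dot χ (v w)) '' W with hBdef
  have hBfin : B.Finite := hWfin.image _
  obtain ⟨ε, hεmem, hεB⟩ := ((Set.Ioo_infinite hε0).diff hBfin).nonempty
  obtain ⟨hε1, hε2⟩ := hεmem
  set ψ : Fin n → ℝ := psiv a + ε • χ with hψdef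
  have hψval : ∀ x, dot ψ x = dot (psiv a) x + ε * dot χ x := by
    intro x; rw [hψdef, dot_add, dot_smul]
  refine ⟨ψ, ?_, ?_⟩
  · intro q hqQ hqa
    have h1 := hε0lt q ⟨hqQ, by simpa using hqa⟩
    have hmar : 0 < dot (psiv a) a - dot (psiv a) q := by
      have := psiv_lt (hQc ha) (hQc hqQ) hqa
      linarith
    rw [hψval, hψval]
    rcases le_or_gt 0 (dot χ q - dot χ a) with hv | hv
    · nlinarith
    · nlinarith
  · intro q hqQ q' hq'Q hgq hgq' hne heq
    have hw : (q, q') ∈ W := ⟨hqQ, hq'Q, hgq, hgq', hne⟩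
    have hv0 : dot ψ (v (q, q')) = 0 := by
      rw [hvdef]
      show dot ψ ((dot g q' - dot g a) • (a - q) - (dot g q - dot g a) • (a - q')) = 0
      rw [dot_comb]
      nlinarith [heq]
    rw [hψval] at hv0
    apply hεB
    rw [hBdef]
    refine ⟨(q, q'), hw, ?_⟩
    have hχne := hχ _ hw
    field_simp
    linarith

/-- Simplex-type lemma: if `a ∈ Q` is not a maximizer of `g`, then `a` has a
"neighbor" `b` in the graph of `conv Q` with larger `g`-value. -/
lemma exists_improving_edge {n : ℕ} {Q : Set (Fin n → ℝ)} (hQfin : Q.Finite)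
    (hQc : Q ⊆ cube01 n) {a : Fin n → ℝ} (ha : a ∈ Q) (g : Fin n → ℝ)
    (himp : ∃ b0 ∈ Q, dot g a < dot g b0) :
    ∃ b ∈ Q, dot g a < dot g b ∧ IsFaceOf Q {a, b} := by
  classical
  obtain ⟨ψ, hψ1, hψ2⟩ := exists_generic hQfin hQc ha g
  set D : Set (Fin n → ℝ) := {q ∈ Q | dot g a < dot g q} with hDdef
  have hDfin : D.Finite := hQfin.subset (fun q hq => hq.1)
  have hDne : D.Nonempty := by obtain ⟨b0, hb0, hgb0⟩ := himp; exact ⟨b0, hb0, hgb0⟩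
  set r : (Fin n → ℝ) → ℝ := fun q => (dot ψ a - dot ψ q) / (dot g q - dot g a) with hrdef
  obtain ⟨b, hbD, hbmin⟩ := Set.exists_min_image D r hDfin hDne
  have hbQ : b ∈ Q := hbD.1
  have hgb : dot g a < dot g b := hbD.2
  have hba : b ≠ a := fun h => absurd hgb (by rw [h]; exact lt_irrefl _)
  -- positive quantities
  have hnum : ∀ q ∈ D, 0 < dot ψ a - dot ψ q := by
    intro q hq
    have hqa : q ≠ a := fun h => absurd hq.2 (by rw [h]; exact lt_irrefl _)
    have := hψ1 q hq.1 hqa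
    linarith
  have hden : ∀ q ∈ D, 0 < dot g q - dot g a := fun q hq => by linarith [hq.2]
  set t : ℝ := r b with htdef
  have ht : 0 < t := div_pos (hnum b hbD) (hden b hbD)
  -- strict minimality for q ≠ b
  have hstrict : ∀ q ∈ D, q ≠ b → t < r q := by
    intro q hq hqb
    rcases lt_or_eq_of_le (hbmin q hq) with h | h
    · exact h
    · exfalso
      apply hψ2 q hq.1 b hbQ hq.2 hgb hqb
      have hq' := hden q hq
      have hb' := hden b hbD
      have : (dot ψ a - dot ψ q) / (dot g q - dot g a)
          = (dot ψ a - dot ψ b) / (dot g b - dot g a) := h.symm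
      field_simp at this
      linarith
  -- the supporting functional
  set c : Fin n → ℝ := ψ + t • g with hcdef
  have hcval : ∀ x, dot c x = dot ψ x + t * dot g x := by
    intro x; rw [hcdef, dot_add, dot_smul]
  refine ⟨b, hbQ, hgb, c, dot c a, ?_, ?_⟩
  · intro q hqQ
    rw [hcval, hcval]
    by_cases hqD : q ∈ D
    · have h1 := hbmin q hqD
      have h2 := hden q hqD
      have h3 : (dot ψ a - dot ψ q) = r q * (dot g q - dot g a) := by
        rw [hrdef]; field_simp
      nlinarith
    · by_cases hqa : q = a
      · rw [hqa]
      · have hgle : dot g q ≤ dot g a := by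
          by_contra hgt
          exact hqD ⟨hqQ, lt_of_not_ge hgt⟩
        have := hψ1 q hqQ hqa
        nlinarith
  · ext q
    simp only [Set.mem_insert_iff, Set.mem_singleton_iff, Set.mem_setOf_eq]
    constructor
    · rintro (rfl | rfl)
      · exact ⟨ha, rfl⟩
      · refine ⟨hbQ, ?_⟩
        rw [hcval, hcval]
        have h3 : (dot ψ a - dot ψ q) = t * (dot g q - dot g a) := by
          rw [htdef, hrdef]
          exact (div_mul_cancel₀ _ (ne_of_gt (hden _ hbD))).symm
        nlinarith [h3]
    · rintro ⟨hqQ, heq⟩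
      rw [hcval, hcval] at heq
      by_cases hqa : q = a
      · exact Or.inl hqa
      · right
        by_contra hqb
        by_cases hqD : q ∈ D
        · have h1 := hstrict q hqD hqb
          have h2 := hden q hqD
          have h3 : (dot ψ a - dot ψ q) = r q * (dot g q - dot g a) := by
            rw [hrdef]; field_simp
          nlinarith
        · have hgle : dot g q ≤ dot g a := by
            by_contra hgt
            exact hqD ⟨hqQ, lt_of_not_ge hgt⟩
          have := hψ1 q hqQ hqa
          nlinarith

def liftc {n d : ℕ} (h : d ≤ n) (c' : Fin d → ℝ) : Fin n → ℝ :=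
  fun i => if hi : (i : ℕ) < d then c' ⟨i, hi⟩ else 0

lemma dot_liftc {n d : ℕ} (h : d ≤ n) (c' : Fin d → ℝ) (p : Fin n → ℝ) :
    dot (liftc h c') p = dot c' (proj h p) := by
  classical
  rw [dot, dot]
  have h1 : ∑ i : Fin n, liftc h c' i * p i
      = ∑ i ∈ Finset.univ.image (Fin.castLE h), liftc h c' i * p i := by
    symm
    apply Finset.sum_subset (Finset.subset_univ _)
    intro i _ hi
    have hlt : ¬((i:ℕ) < d) := by
      intro hlt
      exact hi (Finset.mem_image.2 ⟨⟨i, hlt⟩, Finset.mem_univ _, by ext; simp⟩)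
    simp [liftc, hlt]
  rw [h1, Finset.sum_image (fun x _ y _ hxy => Fin.castLE_injective h hxy)]
  apply Finset.sum_congr rfl
  intro j _
  simp [liftc, proj, Fin.castLE]

lemma proj_mem_cube01 {n d : ℕ} (h : d ≤ n) {p : Fin n → ℝ} (hp : p ∈ cube01 n) :
    proj h p ∈ cube01 d := fun i => hp (Fin.castLE h i)

/-- Lift an edge of the projected polytope to an edge of the original polytope
crossing from `A` to `P \ A`. -/
lemma exists_lift_edge {n d : ℕ} (hd : d ≤ n)
    {P : Set (Fin n → ℝ)} (hP : P ⊆ cube01 n) {A : Set (Fin n → ℝ)} (hA : A ⊆ P)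
    {x y : Fin d → ℝ} (hx : x ∈ proj hd '' A) (hy : y ∈ proj hd '' P)
    (hyA : y ∉ proj hd '' A) (hxy : x ≠ y) (hedge : IsFaceOf (proj hd '' P) {x, y}) :
    ∃ ab : (Fin n → ℝ) × (Fin n → ℝ), ab.1 ∈ A ∧ ab.2 ∈ P \ A ∧
      proj hd ab.1 = x ∧ proj hd ab.2 = y ∧ IsPolytopeEdge P ab.1 ab.2 := by
  classical
  have hPfin : P.Finite := (cube01_finite n).subset hP
  obtain ⟨c', γ', hb', hface⟩ := hedge
  set Q : Set (Fin n → ℝ) := {p ∈ P | proj hd p ∈ ({x, y} : Set (Fin d → ℝ))} with hQdef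
  have hQsubP : Q ⊆ P := fun p hp => hp.1
  have hQfin : Q.Finite := hPfin.subset hQsubP
  have hQc : Q ⊆ cube01 n := fun p hp => hP (hQsubP hp)
  -- Q is a face of P
  have hfaceQ : IsFaceOf P Q := by
    refine ⟨liftc hd c', γ', ?_, ?_⟩
    · intro p hp
      rw [dot_liftc]
      exact hb' _ ⟨p, hp, rfl⟩
    · ext p
      simp only [hQdef, Set.mem_setOf_eq, dot_liftc]
      constructor
      · rintro ⟨hpP, hpxy⟩
        refine ⟨hpP, ?_⟩
        have : proj hd p ∈ {z | z ∈ proj hd '' P ∧ dot c' z = γ'} := by rw [← hface]; exact hpxy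
        exact this.2
      · rintro ⟨hpP, heq⟩
        refine ⟨hpP, ?_⟩
        rw [hface]
        exact ⟨⟨p, hpP, rfl⟩, heq⟩
  obtain ⟨a, haA, hax⟩ := hx
  obtain ⟨b0, hb0P, hb0y⟩ := hy
  have haQ : a ∈ Q := ⟨hA haA, by rw [hax]; exact Set.mem_insert _ _⟩
  have hb0Q : b0 ∈ Q := ⟨hb0P, by rw [hb0y]; exact Set.mem_insert_of_mem _ rfl⟩
  have hxc : x ∈ cube01 d := hax ▸ proj_mem_cube01 hd (hP (hA haA))
  have hyc : y ∈ cube01 d := hb0y ▸ proj_mem_cube01 hd (hP hb0P)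
  set g : Fin n → ℝ := liftc hd (psiv y) with hgdef
  have hgval : ∀ p, dot g p = dot (psiv y) (proj hd p) := fun p => dot_liftc hd _ p
  have hgax : dot g a = dot (psiv y) x := by rw [hgval, hax]
  have himp : ∃ b0 ∈ Q, dot g a < dot g b0 := by
    refine ⟨b0, hb0Q, ?_⟩
    rw [hgax, hgval, hb0y]
    exact psiv_lt hyc hxc hxy
  obtain ⟨b, hbQ, hgb, hfaceE⟩ := exists_improving_edge hQfin hQc haQ g himp
  have hby : proj hd b = y := by
    rcases hbQ.2 with h | h
    · exfalso
      rw [hgax, hgval, h] at hgb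
      exact lt_irrefl _ hgb
    · exact h
  have hbA : b ∉ A := fun hbA => hyA ⟨b, hbA, hby⟩
  have hab : a ≠ b := fun h => hxy (by rw [← hax, ← hby, h])
  refine ⟨(a, b), haA, ⟨hbQ.1, hbA⟩, hax, hby, hA haA, hbQ.1, hab, ?_⟩
  exact faceOf_trans hPfin hfaceQ hfaceE


/-- Second part of the projection lemma: the number of edges of the graph of `conv P`
between `A` and `P \ A` is at least the number of edges of the graph of the projected
polytope `conv R` between `B = π(A)` and `R \ B`, where `R = π(P)`. -/
theorem edges_ge_projected_edges {n d : ℕ} (hd : d ≤ n)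
    (P : Set (Fin n → ℝ)) (hP : P ⊆ cube01 n) (A : Set (Fin n → ℝ)) (hA : A ⊆ P) :
    polyEdgeCount (proj hd '' P) (proj hd '' A) ((proj hd '' P) \ (proj hd '' A))
      ≤ polyEdgeCount P A (P \ A) := by
  classical
  have hPfin : P.Finite := (cube01_finite n).subset hP
  rw [polyEdgeCount, polyEdgeCount]
  set S := {p : (Fin d → ℝ) × (Fin d → ℝ) | p.1 ∈ proj hd '' A ∧
    p.2 ∈ (proj hd '' P) \ (proj hd '' A) ∧ IsPolytopeEdge (proj hd '' P) p.1 p.2} with hSdef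
  set T := {p : (Fin n → ℝ) × (Fin n → ℝ) | p.1 ∈ A ∧ p.2 ∈ P \ A ∧
    IsPolytopeEdge P p.1 p.2} with hTdef
  have hTfin : T.Finite := by
    apply (hPfin.prod hPfin).subset
    rintro ⟨u, v⟩ ⟨h1, h2, _⟩
    exact ⟨hA h1, h2.1⟩
  have hex : ∀ p ∈ S, ∃ ab : (Fin n → ℝ) × (Fin n → ℝ), ab.1 ∈ A ∧ ab.2 ∈ P \ A ∧
      proj hd ab.1 = p.1 ∧ proj hd ab.2 = p.2 ∧ IsPolytopeEdge P ab.1 ab.2 := by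
    rintro ⟨x, y⟩ ⟨hx, hy, hE⟩
    exact exists_lift_edge hd hP hA hx hy.1 hy.2 hE.2.2.1 hE.2.2.2
  choose! f hf using hex
  refine Set.ncard_le_ncard_of_injOn f ?_ ?_ hTfin
  · intro p hp
    obtain ⟨h1, h2, _, _, h5⟩ := hf p hp
    exact ⟨h1, h2, h5⟩
  · intro p hp p' hp' heq
    obtain ⟨_, _, h3, h4, _⟩ := hf p hp
    obtain ⟨_, _, h3', h4', _⟩ := hf p' hp'
    have : p.1 = p'.1 := by rw [← h3, ← h3', heq]
    have h2 : p.2 = p'.2 := by rw [← h4, ← h4', heq]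
    exact Prod.ext this h2
end
end

section
/- (Harper's edge-isoperimetric inequality) For every d ≥ 1 and every subset C of the vertices of the d-dimensional hypercube graph Q^d, the number of edges of Q^d between C and its complement is at least |C| · log₂(2^d / |C|). -/
noncomputable section

open Real

lemma entropy_lb {v : ℝ} (h0 : 0 ≤ v) (h1 : v ≤ 1/2) :
    2 * v * Real.log 2 ≤ Real.binEntropy v := by
  have hc := Real.strictConcave_binEntropy.concaveOn
  have hx : (0:ℝ) ∈ Set.Icc (0:ℝ) 1 := by norm_num
  have hy : (2⁻¹:ℝ) ∈ Set.Icc (0:ℝ) 1 := by norm_num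
  have h := hc.2 hx hy (show (0:ℝ) ≤ 1 - 2*v by linarith) (show (0:ℝ) ≤ 2*v by linarith)
    (show (1 - 2*v) + 2*v = 1 by ring)
  simp only [smul_eq_mul, Real.binEntropy_zero, Real.binEntropy_two_inv, mul_zero,
    zero_add, add_zero] at h
  have hv : 2*v*2⁻¹ = v := by ring
  rw [hv] at h
  linarith

lemma entropy_id {a b : ℝ} (ha : 0 < a) (hb : 0 < b) :
    (a+b) * Real.binEntropy (b/(a+b)) = (a+b)*Real.log (a+b) - a*Real.log a - b*Real.log b := by
  have hs : 0 < a + b := by linarith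
  rw [Real.binEntropy]
  have h1 : (1 - b/(a+b)) = a/(a+b) := by field_simp; ring
  rw [h1, inv_div, inv_div, Real.log_div hs.ne' hb.ne', Real.log_div hs.ne' ha.ne']
  field_simp
  ring

lemma num_key (d : ℕ) {a b : ℝ} (hb : 0 ≤ b) (hab : b ≤ a) :
    (a+b) * Real.logb 2 ((2:ℝ)^(d+1)/(a+b)) ≤
      a * Real.logb 2 ((2:ℝ)^d/a) + b * Real.logb 2 ((2:ℝ)^d/b) + (a - b) := by
  have l2 : (0:ℝ) < Real.log 2 := Real.log_pos (by norm_num)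
  rcases eq_or_lt_of_le (hb.trans hab) with h0 | ha
  · -- a = 0, hence b = 0
    have ha' : a = 0 := h0.symm
    have hb' : b = 0 := le_antisymm (hab.trans_eq ha') hb
    simp [ha', hb']
  · -- a > 0
    have h3 : a*Real.log a + b*Real.log b + 2*b*Real.log 2 ≤ (a+b)*Real.log (a+b) := by
      rcases eq_or_lt_of_le hb with rfl | hb'
      · simp
      · have hs : 0 < a + b := by linarith
        have hv0 : 0 ≤ b/(a+b) := by positivity
        have hv1 : b/(a+b) ≤ 1/2 := by rw [div_le_iff₀ hs]; linarith
        have h1 := entropy_lb hv0 hv1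
        have h2 := entropy_id ha hb'
        have h4 := mul_le_mul_of_nonneg_left h1 hs.le
        rw [h2] at h4
        have h5 : (a+b) * (2*(b/(a+b))*Real.log 2) = 2*b*Real.log 2 := by
          field_simp <;> try ring
        rw [h5] at h4
        linarith
    have e1 : (a+b) * Real.logb 2 ((2:ℝ)^(d+1)/(a+b)) =
        ((a+b)*(((d:ℝ)+1)*Real.log 2 - Real.log (a+b)))/Real.log 2 := by
      have hs : (0:ℝ) < a + b := by linarith
      rw [Real.logb, Real.log_div (by positivity) hs.ne', Real.log_pow]
      push_cast; field_simp <;> try ring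
    have e2 : a * Real.logb 2 ((2:ℝ)^d/a) = (a*((d:ℝ)*Real.log 2 - Real.log a))/Real.log 2 := by
      rw [Real.logb, Real.log_div (by positivity) ha.ne', Real.log_pow]
      field_simp <;> try ring
    have e3 : b * Real.logb 2 ((2:ℝ)^d/b) = (b*((d:ℝ)*Real.log 2 - Real.log b))/Real.log 2 := by
      rcases eq_or_lt_of_le hb with rfl | hb'
      · simp
      · rw [Real.logb, Real.log_div (by positivity) hb'.ne', Real.log_pow]
        field_simp <;> try ring
    rw [e1, e2, e3]
    rw [← add_div, ← sub_nonneg]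
    have : (a*((d:ℝ)*Real.log 2 - Real.log a) + b*((d:ℝ)*Real.log 2 - Real.log b))/Real.log 2
        + (a - b) - ((a+b)*(((d:ℝ)+1)*Real.log 2 - Real.log (a+b)))/Real.log 2
        = ((a+b)*Real.log (a+b) - (a*Real.log a + b*Real.log b + 2*b*Real.log 2))/Real.log 2 := by
      field_simp <;> try ring
    rw [this]
    apply div_nonneg _ l2.le
    linarith

namespace HarperAux
open Finset Real

abbrev BV (d : ℕ) := Fin d → Bool

def badj {d : ℕ} (x y : BV d) : Prop :=
  (Finset.univ.filter (fun i => x i ≠ y i)).card = 1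

instance {d : ℕ} (x y : BV d) : Decidable (badj x y) := by unfold badj; infer_instance

def bcount (d : ℕ) (C : Finset (BV d)) : ℕ :=
  ∑ x : BV d, ∑ y : BV d, if x ∈ C ∧ y ∉ C ∧ badj x y then 1 else 0

def slice {d : ℕ} (C : Finset (BV (d+1))) (b : Bool) : Finset (BV d) :=
  Finset.univ.filter (fun x => Fin.cons b x ∈ C)

lemma mem_slice {d : ℕ} {C : Finset (BV (d+1))} {b : Bool} {x : BV d} :
    x ∈ slice C b ↔ Fin.cons b x ∈ C := by simp [slice]

lemma card_diff_cons {d : ℕ} (b c : Bool) (x y : BV d) :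
    (Finset.univ.filter (fun i : Fin (d+1) => (Fin.cons b x : BV (d+1)) i ≠ (Fin.cons c y : BV (d+1)) i)).card
      = (if b = c then 0 else 1) + (Finset.univ.filter (fun i => x i ≠ y i)).card := by
  rw [Finset.card_filter, Fin.sum_univ_succ, Finset.card_filter]
  simp only [Fin.cons_zero, Fin.cons_succ]
  rcases eq_or_ne b c with h | h <;> simp [h]

lemma badj_cons {d : ℕ} (b c : Bool) (x y : BV d) :
    badj (Fin.cons b x) (Fin.cons c y) ↔ (b = c ∧ badj x y) ∨ (b ≠ c ∧ x = y) := by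
  unfold badj
  rw [card_diff_cons]
  rcases eq_or_ne b c with h | h
  · simp [h, badj]
  · rw [if_neg h]
    simp only [h, ne_eq, not_false_iff, true_and, false_and, false_or]
    constructor
    · intro hh
      have h0 : (Finset.univ.filter (fun i => ¬ x i = y i)).card = 0 := by omega
      rw [Finset.card_eq_zero, Finset.filter_eq_empty_iff] at h0
      funext i
      simpa using h0 (Finset.mem_univ i)
    · intro hh; subst hh; simp

lemma sum_cons {d : ℕ} {M : Type*} [AddCommMonoid M] (f : BV (d+1) → M) :
    ∑ x : BV (d+1), f x = ∑ b : Bool, ∑ x : BV d, f (Fin.cons b x) := by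
  have h1 : ∑ p : Bool × BV d, f (Fin.cons p.1 p.2) = ∑ x, f x :=
    Fintype.sum_equiv (Fin.consEquiv (fun _ => Bool)) _ _ (fun p => rfl)
  have h2 := Fintype.sum_prod_type (fun p : Bool × BV d => f (Fin.cons p.1 p.2))
  rw [← h1, h2]

lemma card_slices {d : ℕ} (C : Finset (BV (d+1))) :
    C.card = (slice C false).card + (slice C true).card := by
  have h1 : C.card = ∑ x : BV (d+1), if x ∈ C then 1 else 0 := by
    rw [← Finset.card_filter]; congr 1; simp
  rw [h1, sum_cons (fun x => if x ∈ C then 1 else 0), Fintype.sum_bool]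
  simp only [← mem_slice, ← Finset.card_filter]
  simp [Nat.add_comm]

lemma bcount_succ {d : ℕ} (C : Finset (BV (d+1))) :
    bcount (d+1) C = bcount d (slice C false) + bcount d (slice C true)
      + ((slice C false \ slice C true).card + (slice C true \ slice C false).card) := by
  have key : ∀ b c : Bool, b ≠ c →
      (∑ x : BV d, ∑ y : BV d, if (Fin.cons b x ∈ C ∧ Fin.cons c y ∉ C ∧
          badj (Fin.cons b x) (Fin.cons c y)) then 1 else 0)
        = (slice C b \ slice C c).card := by
    intro b c hbc
    have hx : ∀ x : BV d, (∑ y : BV d, if (Fin.cons b x ∈ C ∧ Fin.cons c y ∉ C ∧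
          badj (Fin.cons b x) (Fin.cons c y)) then 1 else 0)
        = if x ∈ slice C b ∧ x ∉ slice C c then 1 else 0 := by
      intro x
      have h1 : ∀ y : BV d, (Fin.cons b x ∈ C ∧ Fin.cons c y ∉ C ∧
          badj (Fin.cons b x) (Fin.cons c y)) ↔ (y = x ∧ (x ∈ slice C b ∧ x ∉ slice C c)) := by
        intro y
        rw [badj_cons]
        simp only [hbc, mem_slice, false_and, false_or, ne_eq, not_false_iff, true_and]
        constructor
        · rintro ⟨ha, hb, hc⟩; subst hc; exact ⟨rfl, ha, hb⟩
        · rintro ⟨rfl, ha, hb⟩; exact ⟨ha, hb, rfl⟩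
      simp only [h1, ite_and]
      rw [Finset.sum_ite_eq' Finset.univ x]
      simp
    rw [Finset.sum_congr rfl (fun x _ => hx x), ← Finset.card_filter]
    congr 1
    ext x; simp [Finset.mem_sdiff]
  have keq : ∀ b : Bool,
      (∑ x : BV d, ∑ y : BV d, if (Fin.cons b x ∈ C ∧ Fin.cons b y ∉ C ∧
          badj (Fin.cons b x) (Fin.cons b y)) then 1 else 0) = bcount d (slice C b) := by
    intro b
    unfold bcount
    refine Finset.sum_congr rfl (fun x _ => Finset.sum_congr rfl (fun y _ => ?_))
    congr 1
    rw [badj_cons]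
    simp [mem_slice]
  have hsplit : ∀ b : Bool, ∀ x : BV d,
      (∑ y : BV (d+1), if (Fin.cons b x ∈ C ∧ y ∉ C ∧ badj (Fin.cons b x) y) then 1 else 0)
      = ∑ c : Bool, ∑ y : BV d, if (Fin.cons b x ∈ C ∧ Fin.cons c y ∉ C ∧
          badj (Fin.cons b x) (Fin.cons c y)) then 1 else 0 := fun b x =>
    sum_cons (fun y => if (Fin.cons b x ∈ C ∧ y ∉ C ∧ badj (Fin.cons b x) y) then 1 else 0)
  have hb : ∀ b : Bool,
      (∑ x : BV d, ∑ y : BV (d+1), if (Fin.cons b x ∈ C ∧ y ∉ C ∧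
          badj (Fin.cons b x) y) then 1 else 0)
      = bcount d (slice C b) + (slice C b \ slice C (!b)).card := by
    intro b
    calc (∑ x : BV d, ∑ y : BV (d+1), if (Fin.cons b x ∈ C ∧ y ∉ C ∧
          badj (Fin.cons b x) y) then 1 else 0)
        = ∑ x : BV d, ∑ c : Bool, ∑ y : BV d, if (Fin.cons b x ∈ C ∧ Fin.cons c y ∉ C ∧
          badj (Fin.cons b x) (Fin.cons c y)) then 1 else 0 :=
          Finset.sum_congr rfl (fun x _ => hsplit b x)
      _ = ∑ c : Bool, ∑ x : BV d, ∑ y : BV d, if (Fin.cons b x ∈ C ∧ Fin.cons c y ∉ C ∧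
          badj (Fin.cons b x) (Fin.cons c y)) then 1 else 0 := Finset.sum_comm
      _ = bcount d (slice C b) + (slice C b \ slice C (!b)).card := by
          rw [Fintype.sum_bool]
          cases b
          · rw [keq false, key false true (by simp)]
            simp only [Bool.not_false, Bool.not_true]
            try omega
          · rw [keq true, key true false (by simp)]
            simp only [Bool.not_false, Bool.not_true]
            try omega
  rw [show bcount (d+1) C = ∑ x : BV (d+1), ∑ y : BV (d+1),
      if (x ∈ C ∧ y ∉ C ∧ badj x y) then 1 else 0 from rfl,
    sum_cons (fun x => ∑ y : BV (d+1), if (x ∈ C ∧ y ∉ C ∧ badj x y) then 1 else 0),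
    Fintype.sum_bool, hb true, hb false]
  simp only [Bool.not_true, Bool.not_false]
  omega



theorem bharper : ∀ (d : ℕ) (C : Finset (BV d)),
    (C.card : ℝ) * Real.logb 2 ((2:ℝ)^d / (C.card : ℝ)) ≤ (bcount d C : ℝ) := by
  intro d
  induction d with
  | zero =>
    intro C
    have hle : C.card ≤ 1 := by
      have := Finset.card_le_univ C
      simpa using this
    interval_cases h : C.card <;> simp
  | succ d ih =>
    intro C
    have hcard := card_slices C
    have hcnt := bcount_succ C
    set F := slice C false with hF
    set T := slice C true with hT
    have ihF := ih F
    have ihT := ih T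
    have hc : (C.card : ℝ) = (F.card : ℝ) + (T.card : ℝ) := by exact_mod_cast hcard
    have hcnt' : (bcount (d+1) C : ℝ)
        = (bcount d F : ℝ) + (bcount d T : ℝ) + (((F \ T).card : ℝ) + ((T \ F).card : ℝ)) := by
      exact_mod_cast hcnt
    have crossF : ((F.card : ℝ) - (T.card : ℝ)) ≤ ((F \ T).card : ℝ) := by
      have h1 := Finset.card_le_card_sdiff_add_card (s := F) (t := T)
      have h2 : (F.card : ℝ) ≤ ((F \ T).card : ℝ) + (T.card : ℝ) := by exact_mod_cast h1
      linarith
    have crossT : ((T.card : ℝ) - (F.card : ℝ)) ≤ ((T \ F).card : ℝ) := by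
      have h1 := Finset.card_le_card_sdiff_add_card (s := T) (t := F)
      have h2 : (T.card : ℝ) ≤ ((T \ F).card : ℝ) + (F.card : ℝ) := by exact_mod_cast h1
      linarith
    have nn1 : (0:ℝ) ≤ ((F \ T).card : ℝ) := by positivity
    have nn2 : (0:ℝ) ≤ ((T \ F).card : ℝ) := by positivity
    rcases le_total (T.card : ℝ) (F.card : ℝ) with hle | hle
    · have key := num_key d (a := (F.card : ℝ)) (b := (T.card : ℝ)) (by positivity) hle
      rw [hc, hcnt']
      exact key.trans (by linarith)
    · have key := num_key d (a := (T.card : ℝ)) (b := (F.card : ℝ)) (by positivity) hle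
      rw [hc, hcnt']
      have hcomm : ((F.card : ℝ) + (T.card : ℝ)) * Real.logb 2
            ((2:ℝ)^(d+1) / ((F.card : ℝ) + (T.card : ℝ)))
          = ((T.card : ℝ) + (F.card : ℝ)) * Real.logb 2
            ((2:ℝ)^(d+1) / ((T.card : ℝ) + (F.card : ℝ))) := by rw [add_comm]
      rw [hcomm]
      exact key.trans (by linarith)

end HarperAux


namespace HarperAux

def emb {d : ℕ} (x : BV d) : Fin d → ℝ := fun i => if x i then 1 else 0

lemma emb_inj {d : ℕ} : Function.Injective (emb (d := d)) := by
  intro x y h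
  funext i
  have hi := congrFun h i
  cases hx : x i <;> cases hy : y i <;> simp [emb, hx, hy] at hi ⊢

lemma mem_cube_iff {d : ℕ} {c : Fin d → ℝ} : c ∈ cube01 d ↔ ∃ x : BV d, emb x = c := by
  constructor
  · intro hc
    refine ⟨fun i => decide (c i = 1), ?_⟩
    funext i
    rcases hc i with h | h <;> simp [emb, h]
  · rintro ⟨x, rfl⟩
    intro i
    cases hx : x i <;> simp [emb, hx]

lemma cubeAdj_emb {d : ℕ} (x y : BV d) : cubeAdj (emb x) (emb y) ↔ badj x y := by
  unfold cubeAdj badj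
  have hset : {i | emb x i ≠ emb y i} = {i | x i ≠ y i} := by
    ext i
    cases hx : x i <;> cases hy : y i <;> simp [emb, hx, hy]
  rw [hset, Set.ncard_eq_toFinset_card', Set.toFinset_setOf]

lemma bcount_eq_card {d : ℕ} (S : Finset (BV d)) :
    bcount d S = ((Finset.univ ×ˢ Finset.univ).filter
      (fun p : BV d × BV d => p.1 ∈ S ∧ p.2 ∉ S ∧ badj p.1 p.2)).card := by
  rw [Finset.card_filter, Finset.sum_product]
  rfl

end HarperAux

/-- Harper's edge-isoperimetric inequality for the hypercube: for every `C ⊆ {0,1}^d`,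
the number of hypercube edges leaving `C` is at least `|C| · log₂(2^d / |C|)`. -/
theorem harper_edge_isoperimetry {d : ℕ} (hd : 1 ≤ d)
    (C : Set (Fin d → ℝ)) (hC : C ⊆ cube01 d) :
    (C.ncard : ℝ) * Real.logb 2 ((2 : ℝ) ^ d / (C.ncard : ℝ))
      ≤ (cubeEdgeCount C (cube01 d \ C) : ℝ) := by
  classical
  open HarperAux in
  set S : Finset (BV d) := Finset.univ.filter (fun x => emb x ∈ C) with hS
  have hCS : C = emb '' (↑S : Set (BV d)) := by
    ext c
    constructor
    · intro hc
      obtain ⟨x, hx⟩ := mem_cube_iff.1 (hC hc)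
      exact ⟨x, by simp [hS, hx, hc], hx⟩
    · rintro ⟨x, hx, rfl⟩
      simp only [hS, Finset.coe_filter, Set.mem_setOf_eq] at hx
      exact hx.2
  have hncard : C.ncard = S.card := by
    rw [hCS, Set.ncard_image_of_injective _ emb_inj, Set.ncard_coe_finset]
  have hedge : cubeEdgeCount C (cube01 d \ C) = bcount d S := by
    unfold cubeEdgeCount
    have hPQ : {p : (Fin d → ℝ) × (Fin d → ℝ) | p.1 ∈ C ∧ p.2 ∈ cube01 d \ C ∧ cubeAdj p.1 p.2}
        = (Prod.map emb emb) '' {q : BV d × BV d | q.1 ∈ S ∧ q.2 ∉ S ∧ badj q.1 q.2} := by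
      ext p
      constructor
      · rintro ⟨h1, ⟨h2a, h2b⟩, h3⟩
        obtain ⟨x, hx⟩ := mem_cube_iff.1 (hC h1)
        obtain ⟨y, hy⟩ := mem_cube_iff.1 h2a
        refine ⟨(x, y), ⟨?_, ?_, ?_⟩, ?_⟩
        · simp [hS, hx, h1]
        · simp only [hS, Finset.mem_filter, Finset.mem_univ, true_and, hy]
          exact h2b
        · rw [← cubeAdj_emb, hx, hy]; exact h3
        · simp [Prod.map, hx, hy]
      · rintro ⟨⟨x, y⟩, ⟨h1, h2, h3⟩, rfl⟩
        simp only [hS, Finset.mem_filter, Finset.mem_univ, true_and] at h1 h2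
        refine ⟨h1, ⟨mem_cube_iff.2 ⟨y, rfl⟩, h2⟩, (cubeAdj_emb x y).2 h3⟩
    rw [hPQ, Set.ncard_image_of_injective _ (Function.Injective.prodMap emb_inj emb_inj)]
    rw [Set.ncard_eq_toFinset_card', Set.toFinset_setOf, bcount_eq_card,
      Finset.univ_product_univ]
  rw [hncard, hedge]
  exact bharper d S
end
end

section
/- Fix N > 0 and define f : (0, N] → ℝ by f(x) = x·log₂(N/x). Then f is concave and nonnegative, and for any fixed a > 0 the ratio x ↦ f(x+a)/f(x) is decreasing on the domain where both values are defined and positive. Consequently, if 0 < |B| ≤ 3N/4 and |B| ≤ D ≤ |B| + N/20 ≤ N, then f(D) ≥ (4/5)·f(|B|). -/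
set_option maxHeartbeats 1000000


/-- Properties of `f(x) = x·log₂(N/x)` on `(0, N]`: `f` is concave and nonnegative, the ratio
`x ↦ f(x+a)/f(x)` is decreasing (where defined and positive), and consequently if
`0 < |B| ≤ 3N/4` and `|B| ≤ D ≤ |B| + N/20 ≤ N` then `f(D) ≥ (4/5)·f(|B|)`. -/
theorem log_concave_ratio (N : ℝ) (hN : 0 < N) (f : ℝ → ℝ)
    (hf : ∀ x, f x = x * Real.logb 2 (N / x)) :
    ConcaveOn ℝ (Set.Ioc 0 N) f ∧
    (∀ x ∈ Set.Ioc (0 : ℝ) N, 0 ≤ f x) ∧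
    (∀ a : ℝ, 0 < a → ∀ x y : ℝ, 0 < x → x ≤ y → y + a ≤ N → 0 < f x → 0 < f y →
      f (y + a) / f y ≤ f (x + a) / f x) ∧
    (∀ b D : ℝ, 0 < b → b ≤ 3/4 * N → b ≤ D → D ≤ b + N / 20 → b + N / 20 ≤ N →
      4/5 * f b ≤ f D) := by
  have hl2 : 0 < Real.log 2 := Real.log_pos one_lt_two
  -- f agrees with a nicer function on (0, N]
  have hfg : ∀ x : ℝ, 0 < x → f x = (Real.log N * x - x * Real.log x) / Real.log 2 := by
    intro x hx
    rw [hf, Real.logb, Real.log_div hN.ne' hx.ne']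
    ring
  -- concavity
  have hg : ConcaveOn ℝ (Set.Ici (0:ℝ))
      (fun x => (Real.log N * x - x * Real.log x) / Real.log 2) := by
    constructor
    · exact convex_Ici 0
    · intro p hp q hq a b ha hb hab
      have h := Real.convexOn_mul_log.2 hp hq ha hb hab
      simp only [smul_eq_mul] at h ⊢
      have hineq : a * (Real.log N * p - p * Real.log p) + b * (Real.log N * q - q * Real.log q)
          ≤ Real.log N * (a * p + b * q) - (a * p + b * q) * Real.log (a * p + b * q) := by
        nlinarith [h]
      calc a * ((Real.log N * p - p * Real.log p) / Real.log 2)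
            + b * ((Real.log N * q - q * Real.log q) / Real.log 2)
          = (a * (Real.log N * p - p * Real.log p)
            + b * (Real.log N * q - q * Real.log q)) / Real.log 2 := by ring
        _ ≤ (Real.log N * (a * p + b * q)
            - (a * p + b * q) * Real.log (a * p + b * q)) / Real.log 2 := by
            exact div_le_div_of_nonneg_right hineq hl2.le
  have hconc : ConcaveOn ℝ (Set.Ioc 0 N) f := by
    constructor
    · exact convex_Ioc 0 N
    · intro p hp q hq a b ha hb hab
      have hmem : a • p + b • q ∈ Set.Ioc (0:ℝ) N :=
        (convex_Ioc 0 N) hp hq ha hb hab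
      simp only [smul_eq_mul] at hmem ⊢
      rw [hfg p hp.1, hfg q hq.1, hfg _ hmem.1]
      have := hg.2 (Set.mem_Ici.mpr hp.1.le) (Set.mem_Ici.mpr hq.1.le) ha hb hab
      simpa using this
  have hnn : ∀ x ∈ Set.Ioc (0 : ℝ) N, 0 ≤ f x := by
    intro x hx
    rw [hf]
    exact mul_nonneg hx.1.le
      (Real.logb_nonneg one_lt_two ((one_le_div hx.1).mpr hx.2))
  have hratio : ∀ a : ℝ, 0 < a → ∀ x y : ℝ, 0 < x → x ≤ y → y + a ≤ N → 0 < f x → 0 < f y →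
      f (y + a) / f y ≤ f (x + a) / f x := by
    intro a ha x y hx hxy hyN hfx hfy
    have hd : 0 < y + a - x := by linarith
    set t : ℝ := a / (y + a - x) with htdef
    have ht0 : 0 ≤ t := le_of_lt (div_pos ha hd)
    have ht1 : t ≤ 1 := (div_le_one hd).mpr (by linarith)
    have htd : t * (y + a - x) = a := div_mul_cancel₀ a hd.ne'
    have hmx : x ∈ Set.Ioc (0:ℝ) N := ⟨hx, by linarith⟩
    have hmy : y + a ∈ Set.Ioc (0:ℝ) N := ⟨by linarith, hyN⟩
    have h1 : (1 - t) * f x + t * f (y + a) ≤ f (x + a) := by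
      have h := hconc.2 hmx hmy (by linarith : (0:ℝ) ≤ 1 - t) ht0 (by ring)
      simp only [smul_eq_mul] at h
      have e1 : (1 - t) * x + t * (y + a) = x + a := by nlinarith [htd]
      rwa [e1] at h
    have h2 : t * f x + (1 - t) * f (y + a) ≤ f y := by
      have h := hconc.2 hmx hmy ht0 (by linarith : (0:ℝ) ≤ 1 - t) (by ring)
      simp only [smul_eq_mul] at h
      have e2 : t * x + (1 - t) * (y + a) = y := by nlinarith [htd]
      rwa [e2] at h
    have hB : 0 ≤ f (y + a) := hnn _ hmy
    rw [div_le_div_iff₀ hfy hfx]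
    have hQ0 : 0 ≤ t * f x + (1 - t) * f (y + a) := by
      have u1 := mul_nonneg ht0 hfx.le
      have u2 := mul_nonneg (by linarith : (0:ℝ) ≤ 1 - t) hB
      linarith
    have hP0 : 0 ≤ (1 - t) * f x + t * f (y + a) := by
      have u1 := mul_nonneg (by linarith : (0:ℝ) ≤ 1 - t) hfx.le
      have u2 := mul_nonneg ht0 hB
      linarith
    have key := mul_le_mul h1 h2 hQ0 (le_trans hP0 h1)
    nlinarith [key, sq_nonneg (f x - f (y + a)), mul_nonneg ht0 (by linarith : (0:ℝ) ≤ 1 - t)]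
  refine ⟨hconc, hnn, hratio, ?_⟩
  intro b D hb hb34 hbD hD hN20
  rcases eq_or_lt_of_le hbD with rfl | hlt
  · have : 0 ≤ f b := hnn b ⟨hb, by linarith⟩
    linarith
  set a : ℝ := D - b with hadef
  have ha : 0 < a := by linarith
  have haN : a ≤ N / 20 := by linarith
  have hfb : 0 < f b := by
    rw [hf]
    exact mul_pos hb (Real.logb_pos one_lt_two ((one_lt_div hb).mpr (by linarith)))
  have hf34 : 0 < f (3/4 * N) := by
    rw [hf]
    have e : N / (3/4 * N) = 4/3 := by
      rw [div_eq_iff (by positivity)]; ring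
    rw [e]
    exact mul_pos (by linarith) (Real.logb_pos one_lt_two (by norm_num))
  -- numeric inequality: 4/5 * f(3N/4) ≤ f(4N/5)
  have hnum : 4/5 * f (3/4 * N) ≤ f (4/5 * N) := by
    rw [hf, hf]
    have e1 : N / (3/4 * N) = 4/3 := by
      rw [div_eq_iff (by positivity)]; ring
    have e2 : N / (4/5 * N) = 5/4 := by
      rw [div_eq_iff (by positivity)]; ring
    rw [e1, e2, Real.logb, Real.logb]
    have hlog : (3:ℝ) * Real.log (4/3) ≤ 4 * Real.log (5/4) := by
      have h := Real.log_le_log (by norm_num : (0:ℝ) < 64/27)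
        (by norm_num : (64:ℝ)/27 ≤ 625/256)
      have e3 : ((4:ℝ)/3)^(3:ℕ) = 64/27 := by norm_num
      have e4 : ((5:ℝ)/4)^(4:ℕ) = 625/256 := by norm_num
      rw [← e3, ← e4, Real.log_pow, Real.log_pow] at h
      push_cast at h
      linarith
    have key : (3/5*N) * Real.log (4/3) ≤ (4/5*N) * Real.log (5/4) := by
      nlinarith [mul_le_mul_of_nonneg_left hlog (by positivity : (0:ℝ) ≤ N/5)]
    calc 4/5 * (3/4 * N * (Real.log (4/3) / Real.log 2))
        = ((3/5*N) * Real.log (4/3)) / Real.log 2 := by ring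
      _ ≤ ((4/5*N) * Real.log (5/4)) / Real.log 2 := by
          exact div_le_div_of_nonneg_right key hl2.le
      _ = 4/5 * N * (Real.log (5/4) / Real.log 2) := by ring
  -- concavity interpolation: f(3N/4 + a) ≥ 4/5 f(3N/4)
  have hstep : 4/5 * f (3/4 * N) ≤ f (3/4 * N + a) := by
    set t : ℝ := 20 * a / N with htdef
    have ht0 : 0 ≤ t := by positivity
    have ht1 : t ≤ 1 := by
      rw [htdef, div_le_one hN]; linarith
    have htd : t * (N / 20) = a := by
      rw [htdef]; field_simp
    have hmp : 3/4 * N ∈ Set.Ioc (0:ℝ) N := ⟨by linarith, by linarith⟩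
    have hmq : 4/5 * N ∈ Set.Ioc (0:ℝ) N := ⟨by linarith, by linarith⟩
    have h1 := hconc.2 hmp hmq (by linarith : (0:ℝ) ≤ 1 - t) ht0 (by ring)
    simp only [smul_eq_mul] at h1
    have e1 : (1 - t) * (3/4 * N) + t * (4/5 * N) = 3/4 * N + a := by
      nlinarith [htd]
    rw [e1] at h1
    nlinarith [h1, hnum, mul_le_mul_of_nonneg_left hnum ht0, hf34.le]
  have hrat := hratio a ha b (3/4 * N) hb hb34 (by linarith) hfb hf34
  have hba : b + a = D := by rw [hadef]; ring
  rw [hba] at hrat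
  have h45 : 4/5 ≤ f (3/4 * N + a) / f (3/4 * N) :=
    (le_div_iff₀ hf34).mpr (by linarith)
  have hfin : 4/5 ≤ f D / f b := le_trans h45 hrat
  exact (le_div_iff₀ hfb).mp hfin
end
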